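/- Let d ≥ 1, k ≥ 1, n = dk, let M_0, …, M_{d−1}, N_1, …, N_d ∈ ℂ^{k×k}, let S ∈ ℂ^{n×n} be the associated block companion matrix built from M_0,…,M_{d−1}, and let T ∈ ℂ^{n×n} be the block upper triangular matrix built from N_1,…,N_d. Then there exists a sign σ ∈ {1, −1}, depending only on d and k, such that for every λ ∈ ℂ: det(λT − S) = σ · det( M_0 + Σ_{i=1}^{d−1} (M_i + N_i) λ^i + N_d λ^d ). In particular, λ is an eigenvalue of the pencil (S,T) if and only if it is an eigenvalue of the matrix polynomial with coefficients P_0 = M_0, P_i = M_i + N_i (1 ≤ i ≤ d−1), P_d = N_d. -/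

import Mathlib

open Matrix

noncomputable section

/-- The `dk × dk` block companion matrix built from `M 0, …, M (d-1)`. -/
def blockCompanion (d k : ℕ) (hk : 0 < k) (M : ℕ → Matrix (Fin k) (Fin k) ℂ) :
    Matrix (Fin (d * k)) (Fin (d * k)) ℂ :=
  fun p q =>
    if (q : ℕ) < (d - 1) * k then (if (p : ℕ) = (q : ℕ) + k then 1 else 0)
    else - M ((p : ℕ) / k) ⟨(p : ℕ) % k, Nat.mod_lt _ hk⟩ ⟨(q : ℕ) % k, Nat.mod_lt _ hk⟩

/-- The `dk × dk` block upper triangular matrix built from `N 1, …, N d`. -/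
def blockT (d k : ℕ) (hk : 0 < k) (N : ℕ → Matrix (Fin k) (Fin k) ℂ) :
    Matrix (Fin (d * k)) (Fin (d * k)) ℂ :=
  fun p q =>
    if (q : ℕ) < (d - 1) * k then (if p = q then 1 else 0)
    else N ((p : ℕ) / k + 1) ⟨(p : ℕ) % k, Nat.mod_lt _ hk⟩ ⟨(q : ℕ) % k, Nat.mod_lt _ hk⟩

namespace PencilAux

/-- Reindexing `Fin (m+1) × Fin k ≃ Fin ((m+1)*k)` with block layout `(i,a) ↦ i*k+a`. -/
def idx (m k : ℕ) (hk : 0 < k) : (Fin (m + 1) × Fin k) ≃ Fin ((m + 1) * k) where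
  toFun x := ⟨x.1.1 * k + x.2.1, by
    have h1 : x.1.1 + 1 ≤ m + 1 := x.1.2
    have h2 : x.2.1 < k := x.2.2
    calc x.1.1 * k + x.2.1 < (x.1.1 + 1) * k := by nlinarith
    _ ≤ (m + 1) * k := Nat.mul_le_mul_right k h1⟩
  invFun p := (⟨p.1 / k, by rw [Nat.div_lt_iff_lt_mul hk]; exact p.2⟩,
               ⟨p.1 % k, Nat.mod_lt _ hk⟩)
  left_inv x := by
    obtain ⟨⟨i, hi⟩, ⟨a, ha⟩⟩ := x
    simp only [Prod.mk.injEq, Fin.mk.injEq]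
    constructor
    · rw [mul_comm, Nat.mul_add_div hk, Nat.div_eq_of_lt ha, add_zero]
    · rw [mul_comm, Nat.mul_add_mod, Nat.mod_eq_of_lt ha]
  right_inv p := by
    apply Fin.ext
    show p.1 / k * k + p.1 % k = p.1
    rw [mul_comm]; exact Nat.div_add_mod p.1 k

/-- The pencil matrix `λT - S` in block-pair coordinates. -/
def Amat (m k : ℕ) (lam : ℂ) (M N : ℕ → Matrix (Fin k) (Fin k) ℂ) :
    Matrix (Fin (m + 1) × Fin k) (Fin (m + 1) × Fin k) ℂ :=
  fun x y =>
    if y.1.1 < m then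
      lam * (if x = y then 1 else 0) - (if x.1.1 = y.1.1 + 1 ∧ x.2 = y.2 then 1 else 0)
    else lam * N (x.1.1 + 1) x.2 y.2 + M x.1.1 x.2 y.2

lemma pencil_eq_submatrix (m k : ℕ) (hk : 0 < k) (M N : ℕ → Matrix (Fin k) (Fin k) ℂ)
    (lam : ℂ) :
    lam • blockT (m + 1) k hk N - blockCompanion (m + 1) k hk M =
      (Amat m k lam M N).submatrix (idx m k hk).symm (idx m k hk).symm := by
  ext p q
  have hcond : ((q : ℕ) < (m + 1 - 1) * k) ↔ (q : ℕ) / k < m := by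
    rw [Nat.div_lt_iff_lt_mul hk, Nat.add_sub_cancel]
  have hsymm : ∀ r : Fin ((m + 1) * k), (idx m k hk).symm r =
      (⟨(r : ℕ) / k, by rw [Nat.div_lt_iff_lt_mul hk]; exact r.2⟩,
       ⟨(r : ℕ) % k, Nat.mod_lt _ hk⟩) := fun r => rfl
  simp only [Matrix.sub_apply, Matrix.smul_apply, blockT, blockCompanion, smul_eq_mul,
    Matrix.submatrix_apply, hsymm, Amat]
  by_cases hq : (q : ℕ) / k < m
  · rw [if_pos (hcond.2 hq), if_pos (hcond.2 hq), if_pos hq]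
    have h1 : (p = q) ↔
        ((⟨(p : ℕ) / k, by rw [Nat.div_lt_iff_lt_mul hk]; exact p.2⟩ : Fin (m+1)),
         (⟨(p : ℕ) % k, Nat.mod_lt _ hk⟩ : Fin k)) =
        ((⟨(q : ℕ) / k, by rw [Nat.div_lt_iff_lt_mul hk]; exact q.2⟩ : Fin (m+1)),
         (⟨(q : ℕ) % k, Nat.mod_lt _ hk⟩ : Fin k)) := by
      constructor
      · rintro rfl; rfl
      · intro h
        simp only [Prod.mk.injEq, Fin.mk.injEq] at h
        apply Fin.ext
        rw [← Nat.div_add_mod (p : ℕ) k, ← Nat.div_add_mod (q : ℕ) k, h.1, h.2]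
    have h2 : ((p : ℕ) = (q : ℕ) + k) ↔
        ((p : ℕ) / k = (q : ℕ) / k + 1 ∧
         (⟨(p : ℕ) % k, Nat.mod_lt _ hk⟩ : Fin k) = ⟨(q : ℕ) % k, Nat.mod_lt _ hk⟩) := by
      constructor
      · intro h
        rw [h]
        exact ⟨Nat.add_div_right _ hk, by apply Fin.ext; exact Nat.add_mod_right _ _⟩
      · rintro ⟨ha, hb⟩
        simp only [Fin.mk.injEq] at hb
        rw [← Nat.div_add_mod (p : ℕ) k, ← Nat.div_add_mod (q : ℕ) k, ha, hb]
        ring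
    rw [if_congr h1 rfl rfl, if_congr h2 rfl rfl]
  · rw [if_neg (fun h => hq (hcond.1 h)), if_neg (fun h => hq (hcond.1 h)), if_neg hq]
    ring

def Emat (m k : ℕ) (lam : ℂ) : Matrix (Fin (m + 1) × Fin k) (Fin (m + 1) × Fin k) ℂ :=
  fun x y => if x.1.1 ≤ y.1.1 ∧ x.2 = y.2 then lam ^ (y.1.1 - x.1.1) else 0

def Bmat (m k : ℕ) (lam : ℂ) (M N : ℕ → Matrix (Fin k) (Fin k) ℂ) :
    Matrix (Fin (m + 1) × Fin k) (Fin (m + 1) × Fin k) ℂ :=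
  fun x y =>
    if y.1.1 < m then (if x.1.1 = y.1.1 + 1 ∧ x.2 = y.2 then -1 else 0)
    else ∑ l ∈ Finset.Ico x.1.1 (m + 1),
      (lam ^ (l - x.1.1) * M l x.2 y.2 + lam ^ (l - x.1.1 + 1) * N (l + 1) x.2 y.2)

lemma mulEA (m k : ℕ) (lam : ℂ) (M N : ℕ → Matrix (Fin k) (Fin k) ℂ) :
    Emat m k lam * Amat m k lam M N = Bmat m k lam M N := by
  ext ⟨i, a⟩ ⟨j, b⟩
  rw [Matrix.mul_apply, Fintype.sum_prod_type]
  have hinner : ∀ l : Fin (m + 1),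
      (∑ c : Fin k, Emat m k lam (i, a) (l, c) * Amat m k lam M N (l, c) (j, b)) =
      (if i.1 ≤ l.1 then lam ^ (l.1 - i.1) else 0) * Amat m k lam M N (l, a) (j, b) := by
    intro l
    rw [Finset.sum_eq_single a]
    · congr 1; simp [Emat]
    · intro c _ hc
      have hne : ¬ (i.1 ≤ l.1 ∧ a = c) := fun h => hc h.2.symm
      show (if (i.1 ≤ l.1 ∧ a = c) then lam ^ (l.1 - i.1) else 0) * _ = 0
      rw [if_neg hne, zero_mul]
    · simp
  simp_rw [hinner]
  have hA : ∀ l : Fin (m + 1), Amat m k lam M N (l, a) (j, b) =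
      (fun n : ℕ => if j.1 < m then
        lam * (if n = j.1 ∧ a = b then 1 else 0) - (if n = j.1 + 1 ∧ a = b then 1 else 0)
      else lam * N (n + 1) a b + M n a b) l.1 := by
    intro l
    simp [Amat, Prod.ext_iff, Fin.ext_iff]
  simp_rw [hA]
  rw [Fin.sum_univ_eq_sum_range (fun n => (if i.1 ≤ n then lam ^ (n - i.1) else 0) *
    (if j.1 < m then
      lam * (if n = j.1 ∧ a = b then 1 else 0) - (if n = j.1 + 1 ∧ a = b then 1 else 0)
    else lam * N (n + 1) a b + M n a b)) (m + 1)]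
  by_cases hj : j.1 < m
  · simp only [if_pos hj, Bmat]
    by_cases hab : a = b
    · simp only [hab, and_true]
      have hsplit : ∀ n : ℕ, (if i.1 ≤ n then lam ^ (n - i.1) else 0) *
          (lam * (if n = j.1 then 1 else 0) - (if n = j.1 + 1 then 1 else 0)) =
          (if n = j.1 then (if i.1 ≤ n then lam ^ (n - i.1) else 0) * lam else 0) -
          (if n = j.1 + 1 then (if i.1 ≤ n then lam ^ (n - i.1) else 0) else 0) := by
        intro n
        by_cases h1 : n = j.1 <;> by_cases h2 : n = j.1 + 1 <;> simp [h1, h2] <;> omega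
      simp_rw [hsplit]
      rw [Finset.sum_sub_distrib, Finset.sum_ite_eq', Finset.sum_ite_eq',
        if_pos (Finset.mem_range.2 (by omega)), if_pos (Finset.mem_range.2 (by omega))]
      by_cases hij : i.1 ≤ j.1
      · rw [if_pos hij, if_pos (by omega : i.1 ≤ j.1 + 1),
          if_neg (by omega : ¬ i.1 = j.1 + 1)]
        rw [← pow_succ]
        rw [show j.1 - i.1 + 1 = j.1 + 1 - i.1 by omega]
        ring
      · by_cases hij2 : i.1 = j.1 + 1
        · rw [if_neg hij, if_pos (by omega), if_pos hij2,
            show j.1 + 1 - i.1 = 0 by omega]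
          simp
        · rw [if_neg hij, if_neg (by omega), if_neg hij2]; ring
    · have : ∀ n : ℕ, ¬ (n = j.1 ∧ a = b) := fun n h => hab h.2
      have h2 : ∀ n : ℕ, ¬ (n = j.1 + 1 ∧ a = b) := fun n h => hab h.2
      simp [this, h2, hab]
  · simp only [if_neg hj, Bmat]
    have hsplit : ∀ n : ℕ, (if i.1 ≤ n then lam ^ (n - i.1) else 0) *
        (lam * N (n + 1) a b + M n a b) =
        (if i.1 ≤ n then lam ^ (n - i.1) * M n a b + lam ^ (n - i.1 + 1) * N (n + 1) a b
          else 0) := by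
      intro n
      by_cases h : i.1 ≤ n <;> simp [h, pow_succ] <;> ring
    simp_rw [hsplit]
    rw [← Finset.sum_filter]
    congr 1
    ext n
    simp only [Finset.mem_filter, Finset.mem_range, Finset.mem_Ico]
    omega


variable {m k : ℕ}

lemma det_block (C : Matrix (Fin (m + 1) × Fin k) (Fin (m + 1) × Fin k) ℂ)
    (a : Fin (m + 1)) (G : Matrix (Fin k) (Fin k) ℂ)
    (h : ∀ x y : Fin k, C (a, x) (a, y) = G x y) :
    (C.toSquareBlock Prod.fst a).det = G.det := by
  let e : Fin k ≃ {x : Fin (m + 1) × Fin k // x.1 = a} :=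
    { toFun := fun c => ⟨(a, c), rfl⟩
      invFun := fun z => z.1.2
      left_inv := fun c => rfl
      right_inv := fun z => by
        obtain ⟨⟨i, c⟩, hz⟩ := z
        simp only at hz
        subst hz
        rfl }
  rw [← Matrix.det_submatrix_equiv_self e (C.toSquareBlock Prod.fst a)]
  congr 1
  ext x y
  simpa [Matrix.toSquareBlock, Matrix.toSquareBlockProp, Matrix.submatrix_apply, e] using h x y


lemma detE (lam : ℂ) : (Emat m k lam).det = 1 := by
  have ht : (Emat m k lam).BlockTriangular Prod.fst := by
    intro x y h
    have : ¬ (x.1.1 ≤ y.1.1 ∧ x.2 = y.2) := by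
      rintro ⟨h1, -⟩
      exact absurd h1 (not_le.2 h)
    show (if (x.1.1 ≤ y.1.1 ∧ x.2 = y.2) then lam ^ (y.1.1 - x.1.1) else 0) = 0
    rw [if_neg this]
  rw [ht.det]
  apply Finset.prod_eq_one
  intro a _
  rw [det_block (Emat m k lam) a 1]
  · exact Matrix.det_one
  · intro x y
    simp [Emat, Matrix.one_apply]


def rho (m k : ℕ) : Equiv.Perm (Fin (m + 1) × Fin k) :=
  (finRotate (m + 1)).prodCongr (Equiv.refl (Fin k))

lemma keySum (m : ℕ) (lam : ℂ) (f g : ℕ → ℂ) :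
    ∑ l ∈ Finset.Ico 0 (m + 1), (lam ^ l * f l + lam ^ (l + 1) * g (l + 1)) =
      f 0 + (∑ i ∈ Finset.Ico 1 (m + 1), lam ^ i * (f i + g i)) + lam ^ (m + 1) * g (m + 1) := by
  induction m with
  | zero => simp
  | succ n ih =>
    rw [Finset.sum_Ico_succ_top (by omega), ih,
      Finset.sum_Ico_succ_top (by omega : 1 ≤ n + 1)]
    ring

lemma rotate_val {i : Fin (m + 1)} (h : i.1 < m) : ((finRotate (m + 1)) i).1 = i.1 + 1 := by
  rw [finRotate_succ_apply, Fin.val_add_one]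
  rw [if_neg]
  intro he
  rw [he, Fin.val_last] at h
  omega

lemma rotate_last : (finRotate (m + 1)) (Fin.last m) = 0 := by
  rw [finRotate_succ_apply, Fin.last_add_one]

lemma Ctri (lam : ℂ) (M N : ℕ → Matrix (Fin k) (Fin k) ℂ) :
    ((Bmat m k lam M N).submatrix (rho m k) id).BlockTriangular Prod.fst := by
  intro x y h
  have hy : y.1.1 < x.1.1 := h
  have hx : x.1.1 ≤ m := by omega
  have hym : y.1.1 < m := by omega
  show Bmat m k lam M N ((finRotate (m + 1)) x.1, x.2) (y.1, y.2) = 0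
  rw [Bmat]
  simp only [if_pos hym]
  rw [if_neg]
  rintro ⟨h1, -⟩
  by_cases hxm : x.1.1 < m
  · rw [rotate_val hxm] at h1
    omega
  · have : x.1 = Fin.last m := by
      apply Fin.ext
      simp only [Fin.val_last]
      omega
    rw [this, rotate_last] at h1
    simp at h1

lemma detC (hk : 0 < k) (lam : ℂ) (M N : ℕ → Matrix (Fin k) (Fin k) ℂ) :
    ((Bmat m k lam M N).submatrix (rho m k) id).det =
      (M 0 + (∑ i ∈ Finset.Ico 1 (m + 1), lam ^ i • (M i + N i)) +
        lam ^ (m + 1) • N (m + 1)).det * ((-1 : ℂ) ^ k) ^ m := by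
  rw [(Ctri lam M N).det]
  have himg : (Finset.univ.image (Prod.fst : Fin (m + 1) × Fin k → Fin (m + 1))) =
      Finset.univ := by
    apply Finset.eq_univ_iff_forall.2
    intro a
    exact Finset.mem_image.2 ⟨(a, ⟨0, hk⟩), Finset.mem_univ _, rfl⟩
  rw [himg, ← Finset.mul_prod_erase Finset.univ _ (Finset.mem_univ (Fin.last m))]
  congr 1
  · -- last block equals the matrix polynomial
    apply det_block
    intro x y
    show Bmat m k lam M N ((finRotate (m + 1)) (Fin.last m), x) (Fin.last m, y) = _
    rw [rotate_last, Bmat]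
    simp only [Fin.val_last, lt_irrefl, if_false, Fin.val_zero, Nat.sub_zero]
    have := keySum m lam (fun l => M l x y) (fun l => N l x y)
    simp only [Nat.Ico_zero_eq_range] at this ⊢
    rw [this]
    simp only [Matrix.sum_apply, Matrix.add_apply, Matrix.smul_apply, smul_eq_mul]
  · -- other blocks are -1 • 1
    rw [Finset.prod_congr rfl (fun a ha => ?_), Finset.prod_const,
      Finset.card_erase_of_mem (Finset.mem_univ _), Finset.card_univ, Fintype.card_fin,
      Nat.add_sub_cancel]
    have hane : a ≠ Fin.last m := (Finset.mem_erase.1 ha).1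
    have ham : a.1 < m := Fin.val_lt_last hane
    rw [det_block _ a ((-1 : ℂ) • 1)]
    · rw [Matrix.det_smul, Matrix.det_one, Fintype.card_fin, mul_one]
    · intro x y
      show Bmat m k lam M N ((finRotate (m + 1)) a, x) (a, y) = _
      rw [Bmat]
      simp only [if_pos ham, rotate_val ham, true_and]
      simp [Matrix.smul_apply, Matrix.one_apply]


end PencilAux

open PencilAux in
/-- `det(λT − S)` equals, up to a sign depending only on `d` and `k`, the determinant of
the matrix polynomial `M₀ + Σ_{i=1}^{d−1} (M_i + N_i) λ^i + N_d λ^d`; in particular the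
pencil `(S, T)` and the matrix polynomial have the same eigenvalues. -/
theorem pencil_det_eq_polynomial_det (d k : ℕ) (hd : 0 < d) (hk : 0 < k) :
    ∃ σ : ℂ, (σ = 1 ∨ σ = -1) ∧
      ∀ (M N : ℕ → Matrix (Fin k) (Fin k) ℂ) (lam : ℂ),
        (lam • blockT d k hk N - blockCompanion d k hk M).det =
          σ * (M 0 + (∑ i ∈ Finset.Ico 1 d, lam ^ i • (M i + N i)) + lam ^ d • N d).det ∧
        ((lam • blockT d k hk N - blockCompanion d k hk M).det = 0 ↔
          (M 0 + (∑ i ∈ Finset.Ico 1 d, lam ^ i • (M i + N i)) + lam ^ d • N d).det = 0) := by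
  obtain ⟨m, rfl⟩ : ∃ m, d = m + 1 := ⟨d - 1, by omega⟩
  set s : ℂ := ((Equiv.Perm.sign (rho m k) : ℤ) : ℂ) with hs
  have hs1 : s = 1 ∨ s = -1 := by
    rcases Int.units_eq_one_or (Equiv.Perm.sign (rho m k)) with h | h <;>
      rw [hs, h] <;> norm_num
  set t : ℂ := ((-1 : ℂ) ^ k) ^ m with htdef
  have ht1 : t = 1 ∨ t = -1 := by
    rw [htdef, ← pow_mul]; exact neg_one_pow_eq_or ℂ (k * m)
  refine ⟨s * t, ?_, ?_⟩
  · rcases hs1 with h | h <;> rcases ht1 with h' | h' <;> rw [h, h'] <;> norm_num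
  intro M N lam
  have key : (lam • blockT (m + 1) k hk N - blockCompanion (m + 1) k hk M).det =
      (s * t) * (M 0 + (∑ i ∈ Finset.Ico 1 (m + 1), lam ^ i • (M i + N i)) +
        lam ^ (m + 1) • N (m + 1)).det := by
    rw [pencil_eq_submatrix m k hk M N lam,
      Matrix.det_submatrix_equiv_self ((idx m k hk).symm)]
    have h1 : (Amat m k lam M N).det = (Bmat m k lam M N).det := by
      rw [← mulEA m k lam M N, Matrix.det_mul, detE, one_mul]
    rw [h1]
    have h2 := Matrix.det_permute (rho m k) (Bmat m k lam M N)
    rw [detC hk lam M N] at h2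
    have hss : s * s = 1 := by rcases hs1 with h | h <;> rw [h] <;> norm_num
    calc (Bmat m k lam M N).det
        = s * s * (Bmat m k lam M N).det := by rw [hss, one_mul]
      _ = s * (s * (Bmat m k lam M N).det) := by ring
      _ = s * ((M 0 + (∑ i ∈ Finset.Ico 1 (m + 1), lam ^ i • (M i + N i)) +
            lam ^ (m + 1) • N (m + 1)).det * t) := by rw [← h2, hs]
      _ = s * t * _ := by ring
  refine ⟨key, ?_⟩
  rw [key, mul_eq_zero]
  have hst : s * t ≠ 0 := by
    rcases hs1 with h | h <;> rcases ht1 with h' | h' <;> rw [h, h'] <;> norm_num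
  simp [hst]
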